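/- Let A be a self-adjoint operator on a Hilbert space H. Then u ∈ B(A)*₀ (the closure of H in B(A)*) if and only if u ∈ B(A)* and lim_{R→∞} R^{-1/2} ‖F(|A| < R) u‖ = 0. -/

import Mathlib

open MeasureTheory Filter Topology
open scoped ENNReal

noncomputable section

/-- The dyadic radii: `R_0 = 0`, `R_j = 2^(j-1)` for `j ≥ 1`
(here indexed so that `dyadicR (k+1) = 2^k`). -/
def dyadicR : ℕ → ℝ
  | 0 => 0
  | k + 1 => 2 ^ k

/-- For the self-adjoint multiplication operator by the real function `a` on `L²(μ)`,
the norm of the spectral block `F(R_k ≤ |A| < R_{k+1}) u`, i.e. of the restriction of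
`u` to `{R_k ≤ |a| < R_{k+1}}`, valued in `ℝ≥0∞`. -/
def blockE {α : Type*} [MeasurableSpace α] (μ : Measure α) (a : α → ℝ) (u : α → ℂ)
    (k : ℕ) : ℝ≥0∞ :=
  eLpNorm (Set.indicator {x | dyadicR k ≤ |a x| ∧ |a x| < dyadicR (k + 1)} u) 2 μ

/-- The Besov norm `‖u‖_{B(a)} = Σ_j R_j^{1/2} ‖F_j u‖` of the multiplication
operator by `a` on `L²(μ)`, valued in `ℝ≥0∞`; `u ∈ B(a)` iff this is finite. -/
def besovE {α : Type*} [MeasurableSpace α] (μ : Measure α) (a : α → ℝ) (u : α → ℂ) :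
    ℝ≥0∞ :=
  ∑' k : ℕ, ENNReal.ofReal (Real.sqrt (dyadicR (k + 1))) * blockE μ a u k

/-- The dual Besov norm `‖u‖_{B(a)*} = sup_j R_j^{-1/2} ‖F_j u‖`, valued in `ℝ≥0∞`. -/
def dualE {α : Type*} [MeasurableSpace α] (μ : Measure α) (a : α → ℝ) (u : α → ℂ) :
    ℝ≥0∞ :=
  ⨆ k : ℕ, (ENNReal.ofReal (Real.sqrt (dyadicR (k + 1))))⁻¹ * blockE μ a u k

namespace Aux

lemma dyadicR_succ (k : ℕ) : dyadicR (k+1) = 2 ^ k := rfl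

lemma one_le_sqrt2pow (k : ℕ) : 1 ≤ Real.sqrt ((2:ℝ) ^ k) := by
  rw [show (1:ℝ) = Real.sqrt 1 by simp]
  exact Real.sqrt_le_sqrt (one_le_pow₀ one_le_two)

def w (k : ℕ) : ℝ≥0∞ := ENNReal.ofReal (Real.sqrt (dyadicR (k+1)))

lemma one_le_w (k : ℕ) : 1 ≤ w k := by
  rw [w, dyadicR_succ, show (1:ℝ≥0∞) = ENNReal.ofReal 1 by simp]
  exact ENNReal.ofReal_le_ofReal (one_le_sqrt2pow k)

lemma w_ne_zero (k : ℕ) : w k ≠ 0 := by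
  intro h; simpa [h] using one_le_w k

lemma w_ne_top (k : ℕ) : w k ≠ ⊤ := ENNReal.ofReal_ne_top

lemma w_inv (k : ℕ) : (w k)⁻¹ = ENNReal.ofReal ((Real.sqrt ((2:ℝ)^k))⁻¹) := by
  rw [w, dyadicR_succ, ← ENNReal.ofReal_inv_of_pos]
  positivity

lemma sqrt_tendsto : Tendsto Real.sqrt atTop atTop := by
  refine tendsto_atTop_atTop.2 fun b => ⟨b ^ 2, fun x hx => ?_⟩
  calc b ≤ |b| := le_abs_self b
  _ = Real.sqrt (b ^ 2) := (Real.sqrt_sq_eq_abs b).symm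
  _ ≤ Real.sqrt x := Real.sqrt_le_sqrt hx

lemma geom_sum_sqrt (K : ℕ) :
    ∑ k ∈ Finset.range (K+1), Real.sqrt ((2:ℝ)^k) ≤ 4 * Real.sqrt ((2:ℝ)^K) := by
  induction K with
  | zero => norm_num [Finset.sum_range_one]
  | succ K ih =>
    rw [Finset.sum_range_succ]
    have h1 : Real.sqrt ((2:ℝ)^(K+1)) = Real.sqrt 2 * Real.sqrt ((2:ℝ)^K) := by
      rw [← Real.sqrt_mul (by norm_num)]; ring_nf
    have h2 : (4:ℝ)/3 ≤ Real.sqrt 2 := by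
      rw [show (4:ℝ)/3 = Real.sqrt ((4/3)^2) by rw [Real.sqrt_sq]; norm_num]
      exact Real.sqrt_le_sqrt (by norm_num)
    have h3 : (0:ℝ) ≤ Real.sqrt ((2:ℝ)^K) := Real.sqrt_nonneg _
    calc ∑ k ∈ Finset.range (K+1), Real.sqrt ((2:ℝ)^k) + Real.sqrt ((2:ℝ)^(K+1))
        ≤ 4 * Real.sqrt ((2:ℝ)^K) + Real.sqrt 2 * Real.sqrt ((2:ℝ)^K) := by
          rw [h1] at *; linarith
      _ ≤ 4 * Real.sqrt ((2:ℝ)^(K+1)) := by rw [h1]; nlinarith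

section
variable {α : Type*} [MeasurableSpace α] {μ : Measure α} {a : α → ℝ}

def S (a : α → ℝ) (k : ℕ) : Set α := {x | dyadicR k ≤ |a x| ∧ |a x| < dyadicR (k+1)}

lemma measurableSet_S (ha : Measurable a) (k : ℕ) : MeasurableSet (S a k) := by
  have : S a k = (fun x => |a x|) ⁻¹' (Set.Ico (dyadicR k) (dyadicR (k+1))) := rfl
  rw [this]
  exact ha.abs measurableSet_Ico

lemma blockE_eq (u : α → ℂ) (k : ℕ) :
    blockE μ a u k = eLpNorm ((S a k).indicator u) 2 μ := rfl

lemma dualE_eq (u : α → ℂ) : dualE μ a u = ⨆ k : ℕ, (w k)⁻¹ * blockE μ a u k := rfl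

lemma dyadicR_mono {m n : ℕ} (h : m ≤ n) : dyadicR m ≤ dyadicR n := by
  cases m with
  | zero =>
    cases n with
    | zero => exact le_rfl
    | succ n => exact le_of_lt (by rw [dyadicR_succ]; positivity)
  | succ m =>
    obtain ⟨p, rfl⟩ : ∃ p, n = (m + p) + 1 := ⟨n - (m+1), by omega⟩
    rw [dyadicR_succ, dyadicR_succ]
    exact pow_le_pow_right₀ one_le_two (by omega)

lemma indicator_partition (u : α → ℂ) (n : ℕ) (x : α) :
    Set.indicator {x | |a x| < dyadicR (n+1)} u x
      = ∑ k ∈ Finset.range (n+1), Set.indicator (S a k) u x := by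
  induction n with
  | zero =>
    rw [Finset.sum_range_one]
    congr 1
    ext y
    simp [S, dyadicR, abs_nonneg]
  | succ n ih =>
    rw [Finset.sum_range_succ, ← ih]
    have h2 : dyadicR (n+1) ≤ dyadicR (n+2) := dyadicR_mono (by omega)
    by_cases h1 : x ∈ {x | |a x| < dyadicR (n+1)}
    · have h1' : |a x| < dyadicR (n+1) := h1
      have hx : x ∈ {x | |a x| < dyadicR (n+1+1)} := show |a x| < _ from lt_of_lt_of_le h1' h2
      have hnS : x ∉ S a (n+1) := fun hxS => absurd hxS.1 (not_le.2 h1')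
      rw [Set.indicator_of_mem hx, Set.indicator_of_mem h1,
        Set.indicator_of_notMem hnS, add_zero]
    · by_cases h2' : x ∈ {x | |a x| < dyadicR (n+1+1)}
      · have hxS : x ∈ S a (n+1) := ⟨not_lt.1 h1, h2'⟩
        rw [Set.indicator_of_mem h2', Set.indicator_of_notMem h1,
          Set.indicator_of_mem hxS, zero_add]
      · have hnS : x ∉ S a (n+1) := fun hxS => h2' hxS.2
        rw [Set.indicator_of_notMem h2', Set.indicator_of_notMem h1,
          Set.indicator_of_notMem hnS, add_zero]

lemma blockE_le_mul_dual (u : α → ℂ) (k : ℕ) :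
    blockE μ a u k ≤ w k * dualE μ a u := by
  have h : (w k)⁻¹ * blockE μ a u k ≤ dualE μ a u :=
    le_iSup (fun k => (w k)⁻¹ * blockE μ a u k) k
  calc blockE μ a u k = w k * ((w k)⁻¹ * blockE μ a u k) := by
        rw [← mul_assoc, ENNReal.mul_inv_cancel (w_ne_zero k) (w_ne_top k), one_mul]
    _ ≤ w k * dualE μ a u := mul_le_mul_right h _

lemma eLpNorm_indicator_mono {s t : Set α} (hst : s ⊆ t) (u : α → ℂ) :
    eLpNorm (s.indicator u) 2 μ ≤ eLpNorm (t.indicator u) 2 μ := by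
  refine eLpNorm_mono fun x => ?_
  by_cases hx : x ∈ s
  · rw [Set.indicator_of_mem hx, Set.indicator_of_mem (hst hx)]
  · rw [Set.indicator_of_notMem hx]; simp

lemma dualE_le_eLpNorm (v : α → ℂ) : dualE μ a v ≤ eLpNorm v 2 μ := by
  refine iSup_le fun k => ?_
  calc (w k)⁻¹ * blockE μ a v k ≤ 1 * eLpNorm v 2 μ :=
        mul_le_mul' (ENNReal.inv_le_one.2 (one_le_w k)) (eLpNorm_indicator_le v)
    _ = eLpNorm v 2 μ := one_mul _

lemma dualE_add_le (ha : Measurable a) {f g : α → ℂ} (hf : AEStronglyMeasurable f μ)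
    (hg : AEStronglyMeasurable g μ) :
    dualE μ a (fun x => f x + g x) ≤ dualE μ a f + dualE μ a g := by
  rw [dualE_eq]
  refine iSup_le fun k => ?_
  have hb : blockE μ a (fun x => f x + g x) k ≤ blockE μ a f k + blockE μ a g k := by
    rw [blockE_eq, blockE_eq, blockE_eq]
    have hi : (S a k).indicator (fun x => f x + g x)
        = (S a k).indicator f + (S a k).indicator g := Set.indicator_add _ f g
    rw [hi]
    exact eLpNorm_add_le (hf.indicator (measurableSet_S ha k))
      (hg.indicator (measurableSet_S ha k)) one_le_two
  calc (w k)⁻¹ * blockE μ a (fun x => f x + g x) k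
      ≤ (w k)⁻¹ * blockE μ a f k + (w k)⁻¹ * blockE μ a g k := by
        rw [← mul_add]; exact mul_le_mul_right hb _
    _ ≤ dualE μ a f + dualE μ a g :=
        add_le_add (le_iSup (fun k => (w k)⁻¹ * blockE μ a f k) k)
          (le_iSup (fun k => (w k)⁻¹ * blockE μ a g k) k)

lemma key_bound (ha : Measurable a) {f : α → ℂ} (hf : AEStronglyMeasurable f μ)
    {R : ℝ} (hR : 1 ≤ R) :
    ENNReal.ofReal ((Real.sqrt R)⁻¹) * eLpNorm (Set.indicator {x | |a x| < R} f) 2 μ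
      ≤ ENNReal.ofReal 6 * dualE μ a f := by
  have key : ∀ N : ℕ, R ≤ 2 ^ N → ∃ K : ℕ, R ≤ 2 ^ K ∧ (2:ℝ) ^ K ≤ 2 * R := by
    intro N
    induction N with
    | zero => intro h0; exact ⟨0, h0, by norm_num; linarith⟩
    | succ N ih =>
      intro hN
      by_cases hc : R ≤ 2 ^ N
      · exact ih hc
      · push_neg at hc
        refine ⟨N+1, hN, ?_⟩
        rw [pow_succ]
        linarith
  obtain ⟨N0, hN0⟩ := pow_unbounded_of_one_lt R (one_lt_two (α := ℝ))
  obtain ⟨K, hK1, hK2⟩ := key N0 hN0.le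
  -- chain of inequalities
  have h1 : eLpNorm (Set.indicator {x | |a x| < R} f) 2 μ
      ≤ eLpNorm (Set.indicator {x | |a x| < dyadicR (K+1)} f) 2 μ :=
by
    refine eLpNorm_indicator_mono (fun x hx => ?_) f
    simp only [Set.mem_setOf_eq] at hx ⊢
    rw [dyadicR_succ]
    linarith
  have h2 : Set.indicator {x | |a x| < dyadicR (K+1)} f
      = ∑ k ∈ Finset.range (K+1), (S a k).indicator f := by
    funext x
    rw [indicator_partition f K x, Finset.sum_apply]
  have h3 : eLpNorm (∑ k ∈ Finset.range (K+1), (S a k).indicator f) 2 μ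
      ≤ ∑ k ∈ Finset.range (K+1), blockE μ a f k :=
    eLpNorm_sum_le (fun i _ => hf.indicator (measurableSet_S ha i)) one_le_two
  have h4 : ∑ k ∈ Finset.range (K+1), blockE μ a f k
      ≤ ENNReal.ofReal (4 * Real.sqrt ((2:ℝ)^K)) * dualE μ a f := by
    calc ∑ k ∈ Finset.range (K+1), blockE μ a f k
        ≤ ∑ k ∈ Finset.range (K+1), w k * dualE μ a f :=
          Finset.sum_le_sum fun k _ => blockE_le_mul_dual f k
      _ = (∑ k ∈ Finset.range (K+1), w k) * dualE μ a f := by rw [Finset.sum_mul]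
      _ ≤ ENNReal.ofReal (4 * Real.sqrt ((2:ℝ)^K)) * dualE μ a f := by
          refine mul_le_mul_left ?_ _
          have : (∑ k ∈ Finset.range (K+1), w k)
              = ENNReal.ofReal (∑ k ∈ Finset.range (K+1), Real.sqrt ((2:ℝ)^k)) := by
            rw [ENNReal.ofReal_sum_of_nonneg (fun i _ => Real.sqrt_nonneg _)]
            rfl
          rw [this]
          exact ENNReal.ofReal_le_ofReal (geom_sum_sqrt K)
  have hRpos : (0:ℝ) < R := lt_of_lt_of_le one_pos hR
  have hmain : (Real.sqrt R)⁻¹ * (4 * Real.sqrt ((2:ℝ)^K)) ≤ 6 := by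
    have hs2 : Real.sqrt ((2:ℝ)^K) ≤ Real.sqrt 2 * Real.sqrt R := by
      rw [← Real.sqrt_mul (by norm_num)]
      exact Real.sqrt_le_sqrt hK2
    have hsR : (0:ℝ) < Real.sqrt R := Real.sqrt_pos.2 hRpos
    have hs2' : Real.sqrt 2 ≤ 1.5 := by
      rw [show (1.5:ℝ) = Real.sqrt (1.5^2) by rw [Real.sqrt_sq]; norm_num]
      exact Real.sqrt_le_sqrt (by norm_num)
    rw [inv_mul_le_iff₀ hsR]
    nlinarith [Real.sqrt_nonneg (2:ℝ)]
  calc ENNReal.ofReal ((Real.sqrt R)⁻¹) * eLpNorm (Set.indicator {x | |a x| < R} f) 2 μ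
      ≤ ENNReal.ofReal ((Real.sqrt R)⁻¹)
          * (ENNReal.ofReal (4 * Real.sqrt ((2:ℝ)^K)) * dualE μ a f) := by
        refine mul_le_mul_right ?_ _
        rw [h2] at h1
        exact le_trans h1 (le_trans h3 h4)
    _ = ENNReal.ofReal ((Real.sqrt R)⁻¹ * (4 * Real.sqrt ((2:ℝ)^K))) * dualE μ a f := by
        rw [← mul_assoc, ← ENNReal.ofReal_mul (by positivity)]
    _ ≤ ENNReal.ofReal 6 * dualE μ a f :=
        mul_le_mul_left (ENNReal.ofReal_le_ofReal hmain) _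

end
end Aux

/-- for a self-adjoint operator `A` (modelled, up to unitary
equivalence, as multiplication by a measurable `a` on `H = L²(μ)`), an element `u`
belongs to `B(A)*₀` — the closure of `H` in `B(A)*`, i.e. `u` is the limit in the
dual Besov norm of a sequence from `H` — if and only if `u ∈ B(A)*` and
`lim_{R→∞} R^{-1/2} ‖F(|A| < R) u‖ = 0`. -/
theorem stmt19 {α : Type*} [MeasurableSpace α] (μ : Measure α) (a : α → ℝ)
    (ha : Measurable a) (u : α → ℂ) (hu : AEStronglyMeasurable u μ) :
    (∃ v : ℕ → α → ℂ, (∀ n, MemLp (v n) 2 μ) ∧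
        Tendsto (fun n => dualE μ a (fun x => u x - v n x)) atTop (𝓝 0)) ↔
      (dualE μ a u ≠ ⊤ ∧
        Tendsto (fun R : ℝ =>
            ENNReal.ofReal ((Real.sqrt R)⁻¹) *
              eLpNorm (Set.indicator {x | |a x| < R} u) 2 μ)
          atTop (𝓝 0)) := by
  have hms : ∀ c : ℝ, MeasurableSet {x | |a x| < c} := fun c => by
    have : {x | |a x| < c} = (fun x => |a x|) ⁻¹' (Set.Iio c) := rfl
    rw [this]; exact ha.abs measurableSet_Iio
  have hofr6 : ENNReal.ofReal (6:ℝ) = (6:ℝ≥0∞) := by norm_num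
  constructor
  · rintro ⟨v, hv, hvt⟩
    have hfm : ∀ n, AEStronglyMeasurable (fun x => u x - v n x) μ :=
      fun n => hu.sub (hv n).aestronglyMeasurable
    constructor
    · -- finiteness of dualE u
      obtain ⟨n, hn⟩ := (ENNReal.tendsto_nhds_zero.1 hvt 1 one_pos).exists
      have he : dualE μ a u = dualE μ a (fun x => (u x - v n x) + v n x) := by
        congr 1; funext x; ring
      have hfin : dualE μ a u < ⊤ := by
        calc dualE μ a u = dualE μ a (fun x => (u x - v n x) + v n x) := he
          _ ≤ dualE μ a (fun x => u x - v n x) + dualE μ a (v n) :=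
            Aux.dualE_add_le ha (hfm n) (hv n).aestronglyMeasurable
          _ ≤ 1 + eLpNorm (v n) 2 μ := add_le_add hn (Aux.dualE_le_eLpNorm _)
          _ < ⊤ := ENNReal.add_lt_top.2 ⟨ENNReal.one_lt_top, (hv n).2⟩
      exact hfin.ne
    · rw [ENNReal.tendsto_nhds_zero]
      intro ε hε
      have hδ : (0:ℝ≥0∞) < ε / 2 / 6 := by
        refine ENNReal.div_pos ?_ (by norm_num)
        exact (ENNReal.div_pos hε.ne' (by norm_num)).ne'
      obtain ⟨n, hn⟩ := (ENNReal.tendsto_nhds_zero.1 hvt (ε / 2 / 6) hδ).exists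
      -- second term tendsto
      have ht0 : Tendsto (fun R : ℝ => ENNReal.ofReal ((Real.sqrt R)⁻¹)) atTop (𝓝 0) := by
        have h1 := Aux.sqrt_tendsto.inv_tendsto_atTop
        have h2 := ENNReal.tendsto_ofReal (a := 0) h1
        simpa using h2
      have ht : Tendsto (fun R : ℝ =>
          ENNReal.ofReal ((Real.sqrt R)⁻¹) * eLpNorm (v n) 2 μ) atTop (𝓝 0) := by
        have := ENNReal.Tendsto.mul_const ht0 (Or.inr (hv n).2.ne)
        simpa using this
      have hev2 := ENNReal.tendsto_nhds_zero.1 ht (ε / 2)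
        (ENNReal.div_pos hε.ne' (by norm_num))
      filter_upwards [hev2, eventually_ge_atTop (1:ℝ)] with R hR2 hR1
      have hieq : Set.indicator {x | |a x| < R} u
          = Set.indicator {x | |a x| < R} (fun x => u x - v n x)
            + Set.indicator {x | |a x| < R} (v n) := by
        funext x
        simp only [Pi.add_apply]
        by_cases hx : x ∈ {x | |a x| < R}
        · rw [Set.indicator_of_mem hx, Set.indicator_of_mem hx, Set.indicator_of_mem hx]
          ring
        · rw [Set.indicator_of_notMem hx, Set.indicator_of_notMem hx,
            Set.indicator_of_notMem hx]
          ring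
      calc ENNReal.ofReal ((Real.sqrt R)⁻¹) * eLpNorm (Set.indicator {x | |a x| < R} u) 2 μ
          ≤ ENNReal.ofReal ((Real.sqrt R)⁻¹) *
              (eLpNorm (Set.indicator {x | |a x| < R} (fun x => u x - v n x)) 2 μ
                + eLpNorm (Set.indicator {x | |a x| < R} (v n)) 2 μ) := by
            refine mul_le_mul_right ?_ _
            rw [hieq]
            exact eLpNorm_add_le ((hfm n).indicator (hms R))
              ((hv n).aestronglyMeasurable.indicator (hms R)) one_le_two
        _ = ENNReal.ofReal ((Real.sqrt R)⁻¹) *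
              eLpNorm (Set.indicator {x | |a x| < R} (fun x => u x - v n x)) 2 μ
            + ENNReal.ofReal ((Real.sqrt R)⁻¹) *
              eLpNorm (Set.indicator {x | |a x| < R} (v n)) 2 μ := mul_add _ _ _
        _ ≤ ε / 2 + ε / 2 := by
            refine add_le_add ?_ ?_
            · calc ENNReal.ofReal ((Real.sqrt R)⁻¹) *
                  eLpNorm (Set.indicator {x | |a x| < R} (fun x => u x - v n x)) 2 μ
                  ≤ ENNReal.ofReal 6 * dualE μ a (fun x => u x - v n x) :=
                    Aux.key_bound ha (hfm n) hR1
                _ ≤ ENNReal.ofReal 6 * (ε / 2 / 6) := mul_le_mul_right hn _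
                _ = 6 * (ε / 2 / 6) := by rw [hofr6]
                _ ≤ ε / 2 := ENNReal.mul_div_le
            · calc ENNReal.ofReal ((Real.sqrt R)⁻¹) *
                  eLpNorm (Set.indicator {x | |a x| < R} (v n)) 2 μ
                  ≤ ENNReal.ofReal ((Real.sqrt R)⁻¹) * eLpNorm (v n) 2 μ :=
                    mul_le_mul_right (eLpNorm_indicator_le _) _
                _ ≤ ε / 2 := hR2
        _ = ε := ENNReal.add_halves ε
  · rintro ⟨hfin, htail⟩
    refine ⟨fun n => Set.indicator {x | |a x| < dyadicR (n+1)} u, fun n => ?_, ?_⟩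
    · -- Memℒp
      refine ⟨hu.indicator (hms _), ?_⟩
      have h2 : Set.indicator {x | |a x| < dyadicR (n+1)} u
          = ∑ k ∈ Finset.range (n+1), (Aux.S a k).indicator u := by
        funext x
        rw [Aux.indicator_partition u n x, Finset.sum_apply]
      show eLpNorm (Set.indicator {x | |a x| < dyadicR (n+1)} u) 2 μ < ⊤
      rw [h2]
      calc eLpNorm (∑ k ∈ Finset.range (n+1), (Aux.S a k).indicator u) 2 μ
          ≤ ∑ k ∈ Finset.range (n+1), blockE μ a u k :=
            eLpNorm_sum_le (fun i _ => hu.indicator (Aux.measurableSet_S ha i)) one_le_two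
        _ ≤ ∑ k ∈ Finset.range (n+1), Aux.w k * dualE μ a u :=
            Finset.sum_le_sum fun k _ => Aux.blockE_le_mul_dual u k
        _ < ⊤ := ENNReal.sum_lt_top.2 fun k _ =>
            ENNReal.mul_lt_top (Aux.w_ne_top k).lt_top (lt_top_iff_ne_top.2 hfin)
    · rw [ENNReal.tendsto_nhds_zero]
      intro ε hε
      have hcomp : Tendsto (fun k : ℕ => ENNReal.ofReal ((Real.sqrt ((2:ℝ)^k))⁻¹) *
          eLpNorm (Set.indicator {x | |a x| < (2:ℝ)^k} u) 2 μ) atTop (𝓝 0) :=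
        htail.comp (tendsto_pow_atTop_atTop_of_one_lt one_lt_two)
      obtain ⟨N, hN⟩ := eventually_atTop.1 (ENNReal.tendsto_nhds_zero.1 hcomp ε hε)
      refine eventually_atTop.2 ⟨N, fun n hn => ?_⟩
      rw [Aux.dualE_eq]
      refine iSup_le fun k => ?_
      by_cases hk : k ≤ n
      · -- block vanishes
        have hz : (Aux.S a k).indicator
            (fun x => u x - Set.indicator {x | |a x| < dyadicR (n+1)} u x) = 0 := by
          funext x
          by_cases hx : x ∈ Aux.S a k
          · rw [Set.indicator_of_mem hx]
            have hlt : |a x| < dyadicR (n+1) :=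
              lt_of_lt_of_le hx.2 (Aux.dyadicR_mono (by omega))
            have : x ∈ {x | |a x| < dyadicR (n+1)} := hlt
            rw [Set.indicator_of_mem this]
            simp
          · rw [Set.indicator_of_notMem hx]; rfl
        rw [Aux.blockE_eq, hz]
        simp [eLpNorm_zero]
      · push_neg at hk
        have hk1 : n + 1 ≤ k := hk
        have hb1 : blockE μ a (fun x => u x - Set.indicator {x | |a x| < dyadicR (n+1)} u x) k
            ≤ blockE μ a u k := by
          rw [Aux.blockE_eq, Aux.blockE_eq]
          refine eLpNorm_mono fun x => ?_
          by_cases hx : x ∈ Aux.S a k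
          · rw [Set.indicator_of_mem hx, Set.indicator_of_mem hx]
            have hge : dyadicR (n+1) ≤ |a x| := le_trans (Aux.dyadicR_mono hk1) hx.1
            have : x ∉ {x | |a x| < dyadicR (n+1)} := fun hmem => absurd hmem (not_lt.2 hge)
            rw [Set.indicator_of_notMem this]
            simp
          · rw [Set.indicator_of_notMem hx, Set.indicator_of_notMem hx]
        have hb2 : blockE μ a u k
            ≤ eLpNorm (Set.indicator {x | |a x| < (2:ℝ)^k} u) 2 μ := by
          rw [Aux.blockE_eq]
          refine Aux.eLpNorm_indicator_mono (fun x hx => ?_) u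
          have : |a x| < dyadicR (k+1) := hx.2
          rwa [Aux.dyadicR_succ] at this
        calc (ENNReal.ofReal (Real.sqrt (dyadicR (k+1))))⁻¹ *
              blockE μ a (fun x => u x - Set.indicator {x | |a x| < dyadicR (n+1)} u x) k
            ≤ (Aux.w k)⁻¹ * eLpNorm (Set.indicator {x | |a x| < (2:ℝ)^k} u) 2 μ :=
              mul_le_mul_right (le_trans hb1 hb2) _
          _ = ENNReal.ofReal ((Real.sqrt ((2:ℝ)^k))⁻¹) *
              eLpNorm (Set.indicator {x | |a x| < (2:ℝ)^k} u) 2 μ := by rw [Aux.w_inv]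
          _ ≤ ε := hN k (by omega)
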